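/- There exist exactly three polynomials F(x,y) = y³ + c y x² + d + a y + b y² (after suitable normalization, F(x,y) = y³ + yx² + 1 + ay + by², with a, b ∈ ℂ ranging) such that the curve {F = 0} has an ordinary cusp as its only singularity in ℂ². Specifically, the cuspidal condition is equivalent to y³ + by² + ay + 1 = (y + α)³ with α³ = 1, giving three solutions. -/

import Mathlib

/-- Second derivative of `F` at `z` as a bilinear expression. -/
noncomputable def D2 (F : ℂ × ℂ → ℂ) (z v w : ℂ × ℂ) : ℂ :=
  iteratedFDeriv ℂ 2 F z ![v, w]

/-- Third derivative of `F` at `z` as a trilinear expression. -/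
noncomputable def D3 (F : ℂ × ℂ → ℂ) (z v w u : ℂ × ℂ) : ℂ :=
  iteratedFDeriv ℂ 3 F z ![v, w, u]

/-- `z` is a singular point of the plane curve `{F = 0}`. -/
def IsSingularAt (F : ℂ × ℂ → ℂ) (z : ℂ × ℂ) : Prop :=
  F z = 0 ∧ fderiv ℂ F z = 0

/-- `z` is a node (A₁ singularity) of `{F = 0}`: a singular point with nondegenerate
Hessian. -/
def IsNode (F : ℂ × ℂ → ℂ) (z : ℂ × ℂ) : Prop :=
  IsSingularAt F z ∧
    D2 F z (1, 0) (1, 0) * D2 F z (0, 1) (0, 1) - D2 F z (1, 0) (0, 1) ^ 2 ≠ 0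

/-- `z` is an ordinary cusp (A₂ singularity) of `{F = 0}`: a singular point whose Hessian
has rank one, with nonvanishing third derivative along the kernel direction. -/
def IsOrdinaryCusp (F : ℂ × ℂ → ℂ) (z : ℂ × ℂ) : Prop :=
  IsSingularAt F z ∧ iteratedFDeriv ℂ 2 F z ≠ 0 ∧
    ∃ v : ℂ × ℂ, v ≠ 0 ∧ (∀ w : ℂ × ℂ, D2 F z v w = 0) ∧ D3 F z v v v ≠ 0

/-- The normalized family F(x,y) = y³ + yx² + 1 + ay + by². -/
def cuspFamily (a b : ℂ) : ℂ × ℂ → ℂ := fun z =>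
  z.2 ^ 3 + z.2 * z.1 ^ 2 + 1 + a * z.2 + b * z.2 ^ 2

open ContinuousLinearMap in
noncomputable def pp : ℂ × ℂ →L[ℂ] ℂ := fst ℂ ℂ ℂ
open ContinuousLinearMap in
noncomputable def qq : ℂ × ℂ →L[ℂ] ℂ := snd ℂ ℂ ℂ
@[simp] lemma pp_apply (w : ℂ × ℂ) : pp w = w.1 := rfl
@[simp] lemma qq_apply (w : ℂ × ℂ) : qq w = w.2 := rfl

noncomputable def D1fun (a b : ℂ) (z : ℂ × ℂ) : ℂ × ℂ →L[ℂ] ℂ :=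
  (2*z.1*z.2) • pp + (3*z.2^2 + z.1^2 + a + 2*b*z.2) • qq

lemma hasFDerivAt_cusp (a b : ℂ) (z : ℂ × ℂ) :
    HasFDerivAt (cuspFamily a b) (D1fun a b z) z := by
  have hx : HasFDerivAt (fun w : ℂ × ℂ => w.1) pp z := hasFDerivAt_fst
  have hy : HasFDerivAt (fun w : ℂ × ℂ => w.2) qq z := hasFDerivAt_snd
  have h := (((((hy.mul hy).mul hy).add ((hy.mul (hx.mul hx)))).add
      (hasFDerivAt_const (1:ℂ) z)).add (hy.const_mul a)).add ((hy.mul hy).const_mul b)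
  have hfun : cuspFamily a b = fun w : ℂ × ℂ =>
      w.2 * w.2 * w.2 + w.2 * (w.1 * w.1) + 1 + a * w.2 + b * (w.2 * w.2) := by
    funext w; simp only [cuspFamily]; ring
  rw [hfun]
  refine h.congr_fderiv ?_
  refine ContinuousLinearMap.ext fun w => ?_
  simp [D1fun]; ring

lemma fderiv_cusp (a b : ℂ) : fderiv ℂ (cuspFamily a b) = D1fun a b :=
  funext fun z => (hasFDerivAt_cusp a b z).fderiv

noncomputable def Bpp := pp.smulRight pp
noncomputable def Bpq := pp.smulRight qq
noncomputable def Bqp := qq.smulRight pp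
noncomputable def Bqq := qq.smulRight qq
@[simp] lemma Bpp_apply (v w : ℂ × ℂ) : Bpp v w = v.1 * w.1 := rfl
@[simp] lemma Bpq_apply (v w : ℂ × ℂ) : Bpq v w = v.1 * w.2 := rfl
@[simp] lemma Bqp_apply (v w : ℂ × ℂ) : Bqp v w = v.2 * w.1 := rfl
@[simp] lemma Bqq_apply (v w : ℂ × ℂ) : Bqq v w = v.2 * w.2 := rfl

noncomputable def D2CLM (b : ℂ) (z : ℂ × ℂ) : ℂ × ℂ →L[ℂ] (ℂ × ℂ →L[ℂ] ℂ) :=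
  (2*z.2) • Bpp + (2*z.1) • Bqp + (2*z.1) • Bpq + (6*z.2 + 2*b) • Bqq

lemma hasFDerivAt_D1fun (a b : ℂ) (z : ℂ × ℂ) :
    HasFDerivAt (D1fun a b) (D2CLM b z) z := by
  have hx : HasFDerivAt (fun w : ℂ × ℂ => w.1) pp z := hasFDerivAt_fst
  have hy : HasFDerivAt (fun w : ℂ × ℂ => w.2) qq z := hasFDerivAt_snd
  have h1 : HasFDerivAt (fun w : ℂ × ℂ => (2*w.1*w.2) • pp)
      (((2*z.2) • pp + (2*z.1) • qq).smulRight pp) z := by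
    have := (((hx.const_mul (2:ℂ)).mul hy)).smul_const pp
    refine this.congr_fderiv ?_
    refine ContinuousLinearMap.ext fun v => ?_
    refine ContinuousLinearMap.ext fun w => ?_
    simp only [ContinuousLinearMap.add_apply, ContinuousLinearMap.smul_apply,
      ContinuousLinearMap.smulRight_apply, pp_apply, qq_apply, smul_eq_mul]
    ring
  have h2 : HasFDerivAt (fun w : ℂ × ℂ => (3*w.2^2 + w.1^2 + a + 2*b*w.2) • qq)
      (((2*z.1) • pp + (6*z.2 + 2*b) • qq).smulRight qq) z := by
    have hs : HasFDerivAt (fun w : ℂ × ℂ => 3*(w.2*w.2) + w.1*w.1 + a + 2*b*w.2)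
        ((2*z.1) • pp + (6*z.2 + 2*b) • qq) z := by
      have := ((((hy.mul hy).const_mul (3:ℂ)).add (hx.mul hx)).add
        (hasFDerivAt_const a z)).add (hy.const_mul (2*b))
      refine this.congr_fderiv ?_
      refine ContinuousLinearMap.ext fun w => ?_
      simp; ring
    have h := hs.smul_const qq
    have hfun : (fun w : ℂ × ℂ => (3*w.2^2 + w.1^2 + a + 2*b*w.2) • qq)
        = fun w : ℂ × ℂ => (3*(w.2*w.2) + w.1*w.1 + a + 2*b*w.2) • qq := by
      funext w; ring_nf
    rw [hfun]; exact h
  have h := h1.add h2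
  have hfun : D1fun a b = fun w : ℂ × ℂ =>
      (2*w.1*w.2) • pp + (3*w.2^2 + w.1^2 + a + 2*b*w.2) • qq := rfl
  rw [hfun]
  refine h.congr_fderiv ?_
  refine ContinuousLinearMap.ext fun v => ContinuousLinearMap.ext fun w => ?_
  simp [D2CLM]; ring

lemma fderiv2_cusp (a b : ℂ) : fderiv ℂ (fderiv ℂ (cuspFamily a b)) = D2CLM b := by
  rw [fderiv_cusp]
  exact funext fun z => (hasFDerivAt_D1fun a b z).fderiv

lemma D2_cusp (a b : ℂ) (z v w : ℂ × ℂ) :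
    D2 (cuspFamily a b) z v w =
      2*z.2*v.1*w.1 + 2*z.1*v.2*w.1 + 2*z.1*v.1*w.2 + (6*z.2 + 2*b)*v.2*w.2 := by
  have : D2 (cuspFamily a b) z v w
      = fderiv ℂ (fderiv ℂ (cuspFamily a b)) z (![v, w] 0) (![v, w] 1) :=
    iteratedFDeriv_two_apply _ _ _
  rw [this, fderiv2_cusp]
  simp [D2CLM]
  ring

lemma D3_cusp (a b : ℂ) (z v w u : ℂ × ℂ) :
    D3 (cuspFamily a b) z v w u =
      2*v.2*w.1*u.1 + 2*v.1*w.2*u.1 + 2*v.1*w.1*u.2 + 6*v.2*w.2*u.2 := by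
  have key : ∀ m : Fin 3 → ℂ × ℂ, iteratedFDeriv ℂ 3 (cuspFamily a b) z m
      = fderiv ℂ (fderiv ℂ (fderiv ℂ (cuspFamily a b))) z (m 0) (m 1) (m 2) := by
    intro m
    have h1 : iteratedFDeriv ℂ 3 (cuspFamily a b) z m
        = iteratedFDeriv ℂ 2 (fun y => fderiv ℂ (cuspFamily a b) y) z (Fin.init m)
            (m (Fin.last 2)) := iteratedFDeriv_succ_apply_right m
    rw [h1, iteratedFDeriv_two_apply]
    rfl
  have hx : HasFDerivAt (fun w : ℂ × ℂ => w.1) pp z := hasFDerivAt_fst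
  have hy : HasFDerivAt (fun w : ℂ × ℂ => w.2) qq z := hasFDerivAt_snd
  haveI : IsBoundedSMul ℂ (ℂ × ℂ →L[ℂ] ℂ × ℂ →L[ℂ] ℂ) :=
    @NormedSpace.toIsBoundedSMul ℂ (ℂ × ℂ →L[ℂ] ℂ × ℂ →L[ℂ] ℂ) _ _ inferInstance
  have h1 := (hy.const_mul (2:ℂ)).smul_const Bpp
  have h2 := (hx.const_mul (2:ℂ)).smul_const Bqp
  have h3 := (hx.const_mul (2:ℂ)).smul_const Bpq
  have h4 : HasFDerivAt (fun w : ℂ × ℂ => (6*w.2 + 2*b) • Bqq)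
      (((6:ℂ) • qq).smulRight Bqq) z := by
    have := ((hy.const_mul (6:ℂ)).add (hasFDerivAt_const (2*b) z)).smul_const Bqq
    refine this.congr_fderiv ?_
    refine ContinuousLinearMap.ext fun v => ContinuousLinearMap.ext fun w =>
      ContinuousLinearMap.ext fun u => ?_
    simp
  have hder := ((h1.add h2).add h3).add h4
  have hfun : D2CLM b = fun w : ℂ × ℂ =>
      (2*w.2) • Bpp + (2*w.1) • Bqp + (2*w.1) • Bpq + (6*w.2 + 2*b) • Bqq := rfl
  unfold D3
  rw [key ![v, w, u]]
  rw [fderiv2_cusp, hfun, (show fderiv ℂ (fun w : ℂ × ℂ =>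
    (2*w.2) • Bpp + (2*w.1) • Bqp + (2*w.1) • Bpq + (6*w.2 + 2*b) • Bqq) z = _ from hder.fderiv)]
  simp only [Matrix.cons_val_zero, Matrix.cons_val_one, Matrix.head_cons,
    Matrix.cons_val_two, Matrix.tail_cons]
  simp
  ring

lemma fderiv_cusp_eq_zero_iff (a b : ℂ) (z : ℂ × ℂ) :
    fderiv ℂ (cuspFamily a b) z = 0 ↔
      2*z.1*z.2 = 0 ∧ 3*z.2^2 + z.1^2 + a + 2*b*z.2 = 0 := by
  rw [fderiv_cusp]
  constructor
  · intro h
    constructor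
    · have := congrArg (fun L : ℂ × ℂ →L[ℂ] ℂ => L (1, 0)) h
      simpa [D1fun] using this
    · have := congrArg (fun L : ℂ × ℂ →L[ℂ] ℂ => L (0, 1)) h
      simpa [D1fun] using this
  · rintro ⟨h1, h2⟩
    refine ContinuousLinearMap.ext fun w => ?_
    simp [D1fun, h1, h2]

lemma singular_iff (a b : ℂ) (w : ℂ × ℂ) :
    IsSingularAt (cuspFamily a b) w ↔
      w.1 = 0 ∧ w.2^3 + b*w.2^2 + a*w.2 + 1 = 0 ∧ 3*w.2^2 + 2*b*w.2 + a = 0 := by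
  rw [IsSingularAt, fderiv_cusp_eq_zero_iff]
  constructor
  · rintro ⟨hF, h1, h2⟩
    have hy : w.2 ≠ 0 := by
      intro h0
      rw [cuspFamily] at hF
      rw [h0] at hF
      simp at hF
    have hx : w.1 = 0 := by
      rcases mul_eq_zero.1 h1 with h | h
      · rcases mul_eq_zero.1 h with h' | h'
        · norm_num at h'
        · exact h'
      · exact absurd h hy
    refine ⟨hx, ?_, ?_⟩
    · rw [cuspFamily] at hF; rw [hx] at hF; linear_combination hF
    · rw [hx] at h2; linear_combination h2
  · rintro ⟨hx, hg, hg'⟩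
    refine ⟨?_, ?_, ?_⟩
    · rw [cuspFamily, hx]; linear_combination hg
    · rw [hx]; ring
    · rw [hx]; linear_combination hg'

lemma ne_zero_of_cube_root {α : ℂ} (hα : α ^ 3 = 1) : α ≠ 0 := by
  intro h; rw [h] at hα; norm_num at hα

lemma ab_of_identity {a b α : ℂ} (hα : α ^ 3 = 1)
    (h : ∀ y : ℂ, y ^ 3 + b * y ^ 2 + a * y + 1 = (y + α) ^ 3) :
    a = 3 * α ^ 2 ∧ b = 3 * α := by
  constructor
  · linear_combination (h 1) / 2 - (h (-1)) / 2
  · linear_combination (h 1) / 2 + (h (-1)) / 2 + hα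

lemma cusp_at (α : ℂ) (hα : α ^ 3 = 1) :
    IsOrdinaryCusp (cuspFamily (3 * α ^ 2) (3 * α)) (0, -α) := by
  have hα0 : α ≠ 0 := ne_zero_of_cube_root hα
  refine ⟨?_, ?_, (0, 1), ?_, ?_, ?_⟩
  · rw [singular_iff]
    exact ⟨rfl, by simp; linear_combination -hα, by simp; ring⟩
  · intro h
    have := congrFun (congrArg DFunLike.coe h) ![(1, 0), (1, 0)]
    rw [show iteratedFDeriv ℂ 2 (cuspFamily (3*α^2) (3*α)) (0, -α) ![(1,0),(1,0)]
        = D2 (cuspFamily (3*α^2) (3*α)) (0, -α) (1, 0) (1, 0) from rfl, D2_cusp] at this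
    simp at this
    exact hα0 this
  · simp [Prod.ext_iff]
  · intro w
    have e1 : ((0:ℂ), -α).1 = 0 := rfl
    have e2 : ((0:ℂ), -α).2 = -α := rfl
    rw [D2_cusp, e1, e2]
    ring
  · rw [D3_cusp]
    norm_num

lemma only_singular (α : ℂ) (hα : α ^ 3 = 1) (w : ℂ × ℂ)
    (hw : IsSingularAt (cuspFamily (3 * α ^ 2) (3 * α)) w) : w = (0, -α) := by
  rw [singular_iff] at hw
  obtain ⟨hx, hg, -⟩ := hw
  have : (w.2 + α) ^ 3 = 0 := by linear_combination hg + hα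
  have h2 : w.2 = -α := by
    have h0 := pow_eq_zero_iff (n := 3) (by norm_num) |>.1 this
    linear_combination h0
  exact Prod.ext hx h2

lemma identity_of_cusp {a b : ℂ} {z : ℂ × ℂ} (hz : IsOrdinaryCusp (cuspFamily a b) z) :
    ∃ α : ℂ, α ^ 3 = 1 ∧ ∀ y : ℂ, y ^ 3 + b * y ^ 2 + a * y + 1 = (y + α) ^ 3 := by
  obtain ⟨hsing, hH, v, hv0, hker, hD3⟩ := hz
  rw [singular_iff] at hsing
  obtain ⟨hx, hg, hg'⟩ := hsing
  have hy0 : z.2 ≠ 0 := by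
    intro h; rw [h] at hg; norm_num at hg
  have h1 := hker (1, 0)
  have h2 := hker (0, 1)
  rw [D2_cusp, hx] at h1 h2
  have e1 : ((1:ℂ), (0:ℂ)).1 = 1 := rfl
  have e2 : ((1:ℂ), (0:ℂ)).2 = 0 := rfl
  have e3 : ((0:ℂ), (1:ℂ)).1 = 0 := rfl
  have e4 : ((0:ℂ), (1:ℂ)).2 = 1 := rfl
  rw [e1, e2] at h1
  rw [e3, e4] at h2
  have hv1 : v.1 = 0 := by
    have h1' : 2 * z.2 * v.1 = 0 := by linear_combination h1
    rcases mul_eq_zero.1 h1' with h | h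
    · rcases mul_eq_zero.1 h with h' | h'
      · norm_num at h'
      · exact absurd h' hy0
    · exact h
  have hv2 : v.2 ≠ 0 := by
    intro h
    exact hv0 (Prod.ext hv1 h)
  have h6 : 6 * z.2 + 2 * b = 0 := by
    have h2' : (6 * z.2 + 2 * b) * v.2 = 0 := by linear_combination h2
    rcases mul_eq_zero.1 h2' with h | h
    · exact h
    · exact absurd h hv2
  have hb2 : b = -3 * z.2 := by linear_combination h6 / 2
  have ha2 : a = 3 * z.2 ^ 2 := by linear_combination hg' - 2 * z.2 * hb2
  refine ⟨-z.2, ?_, ?_⟩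
  · linear_combination -hg + z.2 ^ 2 * hb2 + z.2 * ha2
  · intro t
    have hcube : (-z.2) ^ 3 = 1 := by
      linear_combination -hg + z.2 ^ 2 * hb2 + z.2 * ha2
    linear_combination t ^ 2 * hb2 + t * ha2 - hcube

theorem three_cuspidal_members :
    (∀ a b : ℂ, (∃ z : ℂ × ℂ, IsOrdinaryCusp (cuspFamily a b) z) ↔
      ∃ α : ℂ, α ^ 3 = 1 ∧ ∀ y : ℂ, y ^ 3 + b * y ^ 2 + a * y + 1 = (y + α) ^ 3) ∧
    Set.ncard {ab : ℂ × ℂ | ∃ z : ℂ × ℂ, IsOrdinaryCusp (cuspFamily ab.1 ab.2) z ∧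
      ∀ w : ℂ × ℂ, IsSingularAt (cuspFamily ab.1 ab.2) w → w = z} = 3 := by
  constructor
  · intro a b
    constructor
    · rintro ⟨z, hz⟩
      exact identity_of_cusp hz
    · rintro ⟨α, hα, hid⟩
      obtain ⟨ha, hb⟩ := ab_of_identity hα hid
      rw [ha, hb]
      exact ⟨(0, -α), cusp_at α hα⟩
  · have hset : {ab : ℂ × ℂ | ∃ z : ℂ × ℂ, IsOrdinaryCusp (cuspFamily ab.1 ab.2) z ∧
        ∀ w : ℂ × ℂ, IsSingularAt (cuspFamily ab.1 ab.2) w → w = z}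
        = (fun α : ℂ => ((3 * α ^ 2 : ℂ), (3 * α : ℂ))) '' {α : ℂ | α ^ 3 = 1} := by
      ext ab
      simp only [Set.mem_setOf_eq, Set.mem_image]
      constructor
      · rintro ⟨z, hz, -⟩
        obtain ⟨α, hα, hid⟩ := identity_of_cusp hz
        obtain ⟨ha, hb⟩ := ab_of_identity hα hid
        exact ⟨α, hα, by rw [← ha, ← hb]⟩
      · rintro ⟨α, hα, rfl⟩
        exact ⟨(0, -α), cusp_at α hα, fun w hw => only_singular α hα w hw⟩
    rw [hset]
    rw [Set.ncard_image_of_injOn (by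
      intro x hx y hy hxy
      have := congrArg Prod.snd hxy
      simp only at this
      field_simp at this
      exact this)]
    have hroots : {α : ℂ | α ^ 3 = 1} = ↑(Polynomial.nthRootsFinset 3 (1 : ℂ)) := by
      ext x
      simp [Polynomial.mem_nthRootsFinset (by norm_num : 0 < 3)]
    rw [hroots, Set.ncard_coe_finset,
      (Complex.isPrimitiveRoot_exp 3 (by norm_num)).card_nthRootsFinset]
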